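/- Let f: [0,∞) → ℝ satisfy ∫_0^∞ e^{-As}|f(s)| ds < ∞ for every A > 0. Define G(s) = ∫_0^∞ e^{-st} √t f(√t) dt and H(x₁,x₂) = (1/(8π)) (x₁x₂)^{-3/2} G(1/(4x₁) + 1/(4x₂)). Then for all p₁, p₂ > 0, ∫_0^∞ e^{-s(√p₁+√p₂)} f(s) ds = ∫_{ℝ²₊} e^{-p₁x₁-p₂x₂} H(x₁,x₂) dx₁dx₂. -/

import Mathlib

open MeasureTheory Real Set

lemma phi_injOn : InjOn (fun y : ℝ => y - 1/y) (Ioi 0) := by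
  intro a ha b hb h
  simp only [mem_Ioi] at ha hb
  simp only at h
  have h' : a^2*b - b = a*b^2 - a := by field_simp at h; linarith
  nlinarith [mul_pos ha hb]

lemma phi_deriv {y : ℝ} (hy : 0 < y) :
    HasDerivAt (fun y : ℝ => y - 1/y) (1 + 1/y^2) y := by
  have h := (hasDerivAt_id y).sub (hasDerivAt_inv hy.ne')
  have e : (1 : ℝ) - -(y^2)⁻¹ = 1 + 1/y^2 := by field_simp; ring
  rw [e] at h
  exact h.congr_of_eventuallyEq (by filter_upwards with x using by simp [one_div])

lemma phi_image : (fun y : ℝ => y - 1/y) '' (Ioi 0) = univ := by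
  apply eq_univ_of_forall
  intro u
  set s := Real.sqrt (u^2+4) with hsdef
  have hs : s ^ 2 = u^2 + 4 := Real.sq_sqrt (by positivity)
  have hs' : |u| < s := by
    nlinarith [Real.sqrt_nonneg (u^2+4), abs_nonneg u, sq_abs u]
  have hy : 0 < (u + s)/2 := by have := neg_abs_le u; linarith
  refine ⟨(u + s)/2, mem_Ioi.mpr hy, ?_⟩
  have hmul : ((u + s)/2) * ((s - u)/2) = 1 := by nlinarith
  have hinv : (s - u)/2 = 1/((u + s)/2) := eq_one_div_of_mul_eq_one_left (by linarith [hmul] ; )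
  simp only
  rw [← hinv]; ring

lemma glasser_sum (c : ℝ) (hc : 0 < c) :
    ∫ y in Ioi (0:ℝ), |1 + 1/y^2| • Real.exp (-c * (y - 1/y)^2) = Real.sqrt (π / c) := by
  have h := integral_image_eq_integral_abs_deriv_smul (f := fun y : ℝ => y - 1/y)
      (f' := fun y => 1 + 1/y^2) measurableSet_Ioi
      (fun x hx => (phi_deriv (mem_Ioi.mp hx)).hasDerivWithinAt) phi_injOn
      (fun u => Real.exp (-c * u^2))
  rw [phi_image] at h
  rw [← h, setIntegral_univ]
  exact integral_gaussian c

lemma glasser_integrable (c : ℝ) (hc : 0 < c) :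
    IntegrableOn (fun y : ℝ => (1 + 1/y^2) * Real.exp (-c * (y - 1/y)^2)) (Ioi 0) := by
  have h := (integrableOn_image_iff_integrableOn_abs_deriv_smul (f := fun y : ℝ => y - 1/y)
      (f' := fun y => 1 + 1/y^2) measurableSet_Ioi
      (fun x hx => (phi_deriv (mem_Ioi.mp hx)).hasDerivWithinAt) phi_injOn
      (fun u => Real.exp (-c * u^2))).mp
  rw [phi_image] at h
  have h2 := h ((integrable_exp_neg_mul_sq hc).integrableOn)
  apply h2.congr_fun ?_ measurableSet_Ioi
  intro y hy
  have : 0 < y := mem_Ioi.mp hy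
  simp only [smul_eq_mul]
  rw [abs_of_pos (by positivity)]

lemma inv_sym (c : ℝ) :
    ∫ y in Ioi (0:ℝ), (1/y^2) * Real.exp (-c * (y - 1/y)^2)
      = ∫ y in Ioi (0:ℝ), Real.exp (-c * (y - 1/y)^2) := by
  have h := integral_comp_rpow_Ioi (fun y => Real.exp (-c * (y - 1/y)^2))
      (p := -1) (by norm_num)
  rw [← h]
  apply setIntegral_congr_fun measurableSet_Ioi
  intro x hx
  have hx' : 0 < x := mem_Ioi.mp hx
  have e1 : x ^ ((-1:ℝ) - 1) = 1/x^2 := by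
    rw [show (-1:ℝ) - 1 = -2 by norm_num, Real.rpow_neg hx'.le,
      show (2:ℝ) = ((2:ℕ):ℝ) by norm_num, Real.rpow_natCast, one_div]
  have e2 : x ^ (-1:ℝ) = 1/x := by
    rw [Real.rpow_neg_one, one_div]
  simp only [smul_eq_mul, e1, e2]
  rw [abs_neg, abs_one, one_mul, one_div_one_div]
  congr 2
  ring

lemma half_val (c : ℝ) (hc : 0 < c) :
    ∫ y in Ioi (0:ℝ), Real.exp (-c * (y - 1/y)^2) = Real.sqrt (π / c) / 2 := by
  have hsum := glasser_sum c hc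
  have hint := glasser_integrable c hc
  have hmeas : Measurable fun y : ℝ => Real.exp (-c * (y - 1/y)^2) := by fun_prop
  have hint1 : IntegrableOn (fun y : ℝ => Real.exp (-c * (y - 1/y)^2)) (Ioi 0) := by
    apply hint.mono' (hmeas.aestronglyMeasurable)
    filter_upwards [ae_restrict_mem measurableSet_Ioi] with y hy
    have : (0:ℝ) < y := mem_Ioi.mp hy
    rw [Real.norm_eq_abs, abs_of_pos (Real.exp_pos _)]
    nlinarith [Real.exp_pos (-c * (y - 1/y)^2), sq_nonneg (1/y),
      mul_pos (show (0:ℝ) < 1/y^2 by positivity) (Real.exp_pos (-c * (y - 1/y)^2))]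
  have hint2 : IntegrableOn (fun y : ℝ => (1/y^2) * Real.exp (-c * (y - 1/y)^2)) (Ioi 0) := by
    apply hint.mono' ?_
    · filter_upwards [ae_restrict_mem measurableSet_Ioi] with y hy
      have : (0:ℝ) < y := mem_Ioi.mp hy
      rw [Real.norm_eq_abs, abs_of_pos (by positivity)]
      nlinarith [Real.exp_pos (-c * (y - 1/y)^2)]
    · exact ((measurable_const.div (measurable_id.pow_const 2)).mul hmeas).aestronglyMeasurable
  have hsplit : ∫ y in Ioi (0:ℝ), |1 + 1/y^2| • Real.exp (-c * (y - 1/y)^2)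
      = (∫ y in Ioi (0:ℝ), Real.exp (-c * (y - 1/y)^2))
        + ∫ y in Ioi (0:ℝ), (1/y^2) * Real.exp (-c * (y - 1/y)^2) := by
    rw [← integral_add hint1 hint2]
    apply setIntegral_congr_fun measurableSet_Ioi
    intro y hy
    have : (0:ℝ) < y := mem_Ioi.mp hy
    simp only [smul_eq_mul]
    rw [abs_of_pos (by positivity)]
    ring
  rw [hsplit, inv_sym] at hsum
  linarith

lemma inv_sq_integrable (c : ℝ) (hc : 0 < c) :
    IntegrableOn (fun y : ℝ => (1/y^2) * Real.exp (-c * (y - 1/y)^2)) (Ioi 0) := by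
  have hmeas : Measurable fun y : ℝ => Real.exp (-c * (y - 1/y)^2) := by fun_prop
  apply (glasser_integrable c hc).mono' ?_
  · filter_upwards [ae_restrict_mem measurableSet_Ioi] with y hy
    have : (0:ℝ) < y := mem_Ioi.mp hy
    rw [Real.norm_eq_abs, abs_of_pos (by positivity)]
    nlinarith [Real.exp_pos (-c * (y - 1/y)^2)]
  · exact ((measurable_const.div (measurable_id.pow_const 2)).mul hmeas).aestronglyMeasurable

section key
variable {a b : ℝ} (ha : 0 < a) (hb : 0 < b)

lemma psi_deriv (r : ℝ) {y : ℝ} :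
    HasDerivAt (fun y : ℝ => r * y^2) (2*r*y) y := by
  have := (hasDerivAt_pow 2 y).const_mul r
  simpa [mul_comm, mul_assoc, mul_left_comm] using this

lemma psi_injOn {r : ℝ} (hr : 0 < r) : InjOn (fun y : ℝ => r * y^2) (Ioi 0) := by
  intro x hx y hy h
  simp only [mem_Ioi] at hx hy
  simp only at h
  have h2 : x^2 = y^2 := mul_left_cancel₀ hr.ne' h
  nlinarith

lemma psi_image {r : ℝ} (hr : 0 < r) : (fun y : ℝ => r * y^2) '' (Ioi 0) = Ioi 0 := by
  ext x
  constructor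
  · rintro ⟨y, hy, rfl⟩
    have : (0:ℝ) < y := mem_Ioi.mp hy
    exact mem_Ioi.mpr (by positivity)
  · intro hx
    have hx' : (0:ℝ) < x := mem_Ioi.mp hx
    refine ⟨Real.sqrt (x/r), mem_Ioi.mpr (Real.sqrt_pos.mpr (by positivity)), ?_⟩
    simp only
    rw [Real.sq_sqrt (by positivity)]
    field_simp

include ha hb in
lemma keyIntegral :
    ∫ x in Ioi (0:ℝ), x ^ (-(3:ℝ)/2) * Real.exp (-(a^2/x) - b^2*x)
      = Real.sqrt π / a * Real.exp (-(2*a*b)) := by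
  set r := a/b with hr
  have hr0 : 0 < r := by positivity
  have himg := psi_image hr0
  have h := integral_image_eq_integral_abs_deriv_smul (f := fun y : ℝ => r * y^2)
      (f' := fun y => 2*r*y) measurableSet_Ioi
      (fun x _ => (psi_deriv r).hasDerivWithinAt) (psi_injOn hr0)
      (fun x => x ^ (-(3:ℝ)/2) * Real.exp (-(a^2/x) - b^2*x))
  rw [himg] at h
  rw [h]
  have hcongr : ∀ y ∈ Ioi (0:ℝ),
      |2*r*y| • ((r*y^2) ^ (-(3:ℝ)/2) * Real.exp (-(a^2/(r*y^2)) - b^2*(r*y^2)))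
        = (2 * (Real.sqrt r)⁻¹ * Real.exp (-(2*a*b)))
            * ((1/y^2) * Real.exp (-(a*b) * (y - 1/y)^2)) := by
    intro y hy
    have hy' : (0:ℝ) < y := mem_Ioi.mp hy
    have e1 : (r*y^2) ^ (-(3:ℝ)/2) = r ^ (-(3:ℝ)/2) * y ^ (-3:ℝ) := by
      rw [Real.mul_rpow hr0.le (sq_nonneg y), ← Real.rpow_natCast y 2,
        ← Real.rpow_mul hy'.le]
      norm_num
    have e2 : Real.exp (-(a^2/(r*y^2)) - b^2*(r*y^2))
        = Real.exp (-(a*b) * (y - 1/y)^2) * Real.exp (-(2*a*b)) := by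
      rw [← Real.exp_add]
      congr 1
      have : a^2/(r*y^2) = a*b/y^2 := by rw [hr]; field_simp
      rw [this, hr]
      field_simp
      ring
    have e3 : r ^ (-(3:ℝ)/2) = (Real.sqrt r)⁻¹ * r⁻¹ := by
      rw [show -(3:ℝ)/2 = -(1/2) + (-1) by norm_num, Real.rpow_add hr0,
        Real.rpow_neg hr0.le, Real.rpow_neg hr0.le, Real.rpow_one,
        ← Real.sqrt_eq_rpow]
    have e4 : y ^ (-3:ℝ) = (y^3)⁻¹ := by
      rw [show (-3:ℝ) = -((3:ℕ):ℝ) by norm_num, Real.rpow_neg hy'.le, Real.rpow_natCast]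
    rw [smul_eq_mul, e1, e2, e3, e4, abs_of_pos (by positivity)]
    field_simp
  rw [setIntegral_congr_fun measurableSet_Ioi hcongr, integral_const_mul,
    inv_sym (a*b), half_val (a*b) (by positivity)]
  have sqa : Real.sqrt a * Real.sqrt a = a := Real.mul_self_sqrt ha.le
  have sqb : Real.sqrt b * Real.sqrt b = b := Real.mul_self_sqrt hb.le
  have s1 : Real.sqrt r = Real.sqrt a / Real.sqrt b := by
    rw [hr, Real.sqrt_div ha.le]
  have s2 : Real.sqrt (π/(a*b)) = Real.sqrt π / (Real.sqrt a * Real.sqrt b) := by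
    rw [Real.sqrt_div Real.pi_nonneg, Real.sqrt_mul ha.le]
  rw [s1, s2]
  have ha' : Real.sqrt a ≠ 0 := by positivity
  have hb' : Real.sqrt b ≠ 0 := by positivity
  field_simp
  ring_nf
  rw [Real.sq_sqrt ha.le]

end key

section key2
variable {a b : ℝ} (ha : 0 < a) (hb : 0 < b)

include ha hb in
lemma keyIntegrable :
    IntegrableOn (fun x : ℝ => x ^ (-(3:ℝ)/2) * Real.exp (-(a^2/x) - b^2*x)) (Ioi 0) := by
  set r := a/b with hr
  have hr0 : 0 < r := by positivity
  have himg := psi_image (r := r) hr0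
  have h := (integrableOn_image_iff_integrableOn_abs_deriv_smul (f := fun y : ℝ => r * y^2)
      (f' := fun y => 2*r*y) measurableSet_Ioi
      (fun x _ => (psi_deriv r).hasDerivWithinAt) (psi_injOn hr0)
      (fun x : ℝ => x ^ (-(3:ℝ)/2) * Real.exp (-(a^2/x) - b^2*x)))
  rw [himg] at h
  rw [h]
  have hint := (inv_sq_integrable (a*b) (by positivity)).const_mul
      (2 * (Real.sqrt r)⁻¹ * Real.exp (-(2*a*b)))
  apply hint.congr
  filter_upwards [ae_restrict_mem measurableSet_Ioi] with y hy
  have hy' : (0:ℝ) < y := mem_Ioi.mp hy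
  have e1 : (r*y^2) ^ (-(3:ℝ)/2) = r ^ (-(3:ℝ)/2) * y ^ (-3:ℝ) := by
    rw [Real.mul_rpow hr0.le (sq_nonneg y), ← Real.rpow_natCast y 2,
      ← Real.rpow_mul hy'.le]
    norm_num
  have e2 : Real.exp (-(a^2/(r*y^2)) - b^2*(r*y^2))
      = Real.exp (-(a*b) * (y - 1/y)^2) * Real.exp (-(2*a*b)) := by
    rw [← Real.exp_add]
    congr 1
    have : a^2/(r*y^2) = a*b/y^2 := by rw [hr]; field_simp
    rw [this, hr]
    field_simp
    ring
  have e3 : r ^ (-(3:ℝ)/2) = (Real.sqrt r)⁻¹ * r⁻¹ := by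
    rw [show -(3:ℝ)/2 = -(1/2) + (-1) by norm_num, Real.rpow_add hr0,
      Real.rpow_neg hr0.le, Real.rpow_neg hr0.le, Real.rpow_one,
      ← Real.sqrt_eq_rpow]
  have e4 : y ^ (-3:ℝ) = (y^3)⁻¹ := by
    rw [show (-3:ℝ) = -((3:ℕ):ℝ) by norm_num, Real.rpow_neg hy'.le, Real.rpow_natCast]
  rw [smul_eq_mul, e1, e2, e3, e4, abs_of_pos (by positivity)]
  field_simp

end key2

/-- The key kernel identity. -/
lemma K_eval {p s : ℝ} (hp : 0 < p) (hs : 0 < s) :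
    ∫ x in Ioi (0:ℝ), Real.exp (-p*x) * (x ^ (-(3:ℝ)/2) * Real.exp (-(s^2/(4*x))))
      = 2 * Real.sqrt π / s * Real.exp (-s * Real.sqrt p) := by
  have ha : 0 < s/2 := by positivity
  have hb : 0 < Real.sqrt p := Real.sqrt_pos.mpr hp
  have h := keyIntegral ha hb
  have hcongr : ∀ x ∈ Ioi (0:ℝ),
      Real.exp (-p*x) * (x ^ (-(3:ℝ)/2) * Real.exp (-(s^2/(4*x))))
        = x ^ (-(3:ℝ)/2) * Real.exp (-((s/2)^2/x) - (Real.sqrt p)^2*x) := by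
    intro x hx
    have hx' : (0:ℝ) < x := mem_Ioi.mp hx
    rw [Real.sq_sqrt hp.le,
      show -((s/2)^2/x) - p*x = -(s^2/(4*x)) + -p*x by field_simp; ring, Real.exp_add]
    ring
  rw [setIntegral_congr_fun measurableSet_Ioi hcongr, h]
  rw [show -(2*(s/2)*Real.sqrt p) = -s * Real.sqrt p by ring]
  rw [show Real.sqrt π / (s/2) = 2 * Real.sqrt π / s by field_simp]

lemma K_integrable {p s : ℝ} (hp : 0 < p) (hs : 0 < s) :
    IntegrableOn (fun x : ℝ => Real.exp (-p*x) * (x ^ (-(3:ℝ)/2) * Real.exp (-(s^2/(4*x))))) (Ioi 0) := by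
  have ha : 0 < s/2 := by positivity
  have hb : 0 < Real.sqrt p := Real.sqrt_pos.mpr hp
  apply (keyIntegrable ha hb).congr_fun ?_ measurableSet_Ioi
  intro x hx
  have hx' : (0:ℝ) < x := mem_Ioi.mp hx
  simp only
  rw [Real.sq_sqrt hp.le,
    show -((s/2)^2/x) - p*x = -(s^2/(4*x)) + -p*x by field_simp; ring, Real.exp_add]
  ring

lemma G_formula (f : ℝ → ℝ) (σ : ℝ) :
    (∫ t in Ioi (0:ℝ), Real.exp (-σ * t) * Real.sqrt t * f (Real.sqrt t))
      = ∫ u in Ioi (0:ℝ), 2 * u^2 * Real.exp (-σ * u^2) * f u := by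
  have h := integral_comp_rpow_Ioi
      (fun t => Real.exp (-σ * t) * Real.sqrt t * f (Real.sqrt t)) (p := 2) (by norm_num)
  rw [← h]
  apply setIntegral_congr_fun measurableSet_Ioi
  intro x hx
  have hx' : (0:ℝ) < x := mem_Ioi.mp hx
  have e1 : x ^ ((2:ℝ) - 1) = x := by
    rw [show (2:ℝ) - 1 = 1 by norm_num, Real.rpow_one]
  have e2 : x ^ (2:ℝ) = x^2 := by
    rw [show (2:ℝ) = ((2:ℕ):ℝ) by norm_num, Real.rpow_natCast]
  simp only [smul_eq_mul, e1, e2, Real.sqrt_sq hx'.le]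
  rw [abs_of_nonneg (by norm_num : (0:ℝ) ≤ 2)]
  ring

lemma mul_exp_sq_le {c u : ℝ} (hc : 0 < c) (hu : 0 ≤ u) :
    u * Real.exp (-(u^2/c)) ≤ Real.sqrt c := by
  have h1 : 1 + u^2/c ≤ Real.exp (u^2/c) := by
    have := Real.add_one_le_exp (u^2/c); linarith
  have hpos : (0:ℝ) < 1 + u^2/c := by positivity
  have h2 : Real.exp (-(u^2/c)) ≤ (1 + u^2/c)⁻¹ := by
    rw [Real.exp_neg]
    exact inv_anti₀ hpos h1
  have h3 : u * Real.exp (-(u^2/c)) ≤ u * (1 + u^2/c)⁻¹ :=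
    mul_le_mul_of_nonneg_left h2 hu
  refine h3.trans ?_
  have e : (1 + u^2/c) = (c + u^2)/c := by field_simp
  rw [e, inv_div, ← mul_div_assoc, div_le_iff₀ (by positivity : (0:ℝ) < c + u^2)]
  have hs := Real.sq_sqrt hc.le
  have key : u * Real.sqrt c ≤ c + u^2 := by
    nlinarith [sq_nonneg (Real.sqrt c - u), mul_nonneg hu (Real.sqrt_nonneg c)]
  have h4 := mul_le_mul_of_nonneg_left key (Real.sqrt_nonneg c)
  have h5 : Real.sqrt c * (u * Real.sqrt c) = u * c := by
    rw [show Real.sqrt c * (u * Real.sqrt c) = u * (Real.sqrt c ^ 2) by ring, hs]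
  linarith

lemma kernel_swap (p : ℝ) (hp : 0 < p) (c : ℝ → ℝ) (hc : Measurable c)
    (hbound : IntegrableOn (fun u => |c u| / u * Real.exp (-u * Real.sqrt p)) (Ioi 0)) :
    ∫ x in Ioi (0:ℝ), ∫ u in Ioi (0:ℝ),
        (Real.exp (-p*x) * (x ^ (-(3:ℝ)/2) * Real.exp (-(u^2/(4*x))))) * c u
      = ∫ u in Ioi (0:ℝ), (2 * Real.sqrt π / u * Real.exp (-u * Real.sqrt p)) * c u := by
  set μ := volume.restrict (Ioi (0:ℝ)) with hμ
  set K : ℝ → ℝ → ℝ :=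
    fun x u => Real.exp (-p*x) * (x ^ (-(3:ℝ)/2) * Real.exp (-(u^2/(4*x)))) with hK
  have hKmeas : Measurable (Function.uncurry fun x u => K x u * c u) := by
    apply Measurable.mul ?_ (hc.comp measurable_snd)
    apply Measurable.mul
    · exact (measurable_fst.const_mul (-p)).exp
    · have h1 : Measurable (fun q : ℝ × ℝ => q.1 ^ (-(3:ℝ)/2)) := by measurability
      exact h1.mul
        (((measurable_snd.pow_const 2).div (measurable_fst.const_mul 4)).neg.exp)
  have hKint : ∀ u : ℝ, 0 < u → IntegrableOn (fun x => K x u) (Ioi 0) := by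
    intro u hu
    exact K_integrable hp hu
  have huncurry : Integrable (Function.uncurry fun x u => K x u * c u) (μ.prod μ) := by
    rw [integrable_prod_iff' hKmeas.aestronglyMeasurable]
    constructor
    · filter_upwards [ae_restrict_mem measurableSet_Ioi] with u hu
      exact (hKint u (mem_Ioi.mp hu)).mul_const (c u)
    · apply (hbound.const_mul (2 * Real.sqrt π)).congr
      filter_upwards [ae_restrict_mem measurableSet_Ioi] with u hu
      have hu' : (0:ℝ) < u := mem_Ioi.mp hu
      have hnorm : ∀ x ∈ Ioi (0:ℝ), ‖K x u * c u‖ = K x u * |c u| := by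
        intro x hx
        have hx' : (0:ℝ) < x := mem_Ioi.mp hx
        rw [norm_mul, Real.norm_eq_abs, Real.norm_eq_abs,
          abs_of_pos (by rw [hK]; positivity)]
      calc 2 * Real.sqrt π * (|c u| / u * Real.exp (-u * Real.sqrt p))
          = (2 * Real.sqrt π / u * Real.exp (-u * Real.sqrt p)) * |c u| := by
            field_simp
        _ = (∫ x in Ioi (0:ℝ), K x u) * |c u| := by rw [K_eval hp hu']
        _ = ∫ x in Ioi (0:ℝ), K x u * |c u| := (integral_mul_const _ _).symm
        _ = ∫ x, ‖K x u * c u‖ ∂μ :=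
            (setIntegral_congr_fun measurableSet_Ioi hnorm).symm
  calc ∫ x in Ioi (0:ℝ), ∫ u in Ioi (0:ℝ), K x u * c u
      = ∫ u in Ioi (0:ℝ), ∫ x in Ioi (0:ℝ), K x u * c u :=
        integral_integral_swap huncurry
    _ = ∫ u in Ioi (0:ℝ), (2 * Real.sqrt π / u * Real.exp (-u * Real.sqrt p)) * c u := by
        apply integral_congr_ae
        filter_upwards [ae_restrict_mem measurableSet_Ioi] with u hu
        rw [integral_mul_const, K_eval hp (mem_Ioi.mp hu)]

theorem laplace_sqrt_reduction
    (f : ℝ → ℝ) (hf_meas : Measurable f)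
    (hf_int : ∀ A > (0:ℝ), IntegrableOn (fun s => Real.exp (-A * s) * |f s|) (Ioi 0))
    (G : ℝ → ℝ)
    (hG : G = fun s => ∫ t in Ioi (0:ℝ), Real.exp (-s * t) * Real.sqrt t * f (Real.sqrt t))
    (H : ℝ → ℝ → ℝ)
    (hH : H = fun x₁ x₂ =>
      1 / (8 * Real.pi) * (x₁ * x₂) ^ (-(3:ℝ)/2) * G (1 / (4 * x₁) + 1 / (4 * x₂)))
    (p₁ p₂ : ℝ) (hp₁ : 0 < p₁) (hp₂ : 0 < p₂) :
    ∫ s in Ioi (0:ℝ), Real.exp (-s * (Real.sqrt p₁ + Real.sqrt p₂)) * f s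
      = ∫ x₁ in Ioi (0:ℝ), ∫ x₂ in Ioi (0:ℝ),
          Real.exp (-p₁ * x₁ - p₂ * x₂) * H x₁ x₂ := by
  subst hH hG
  have hsp₁ : 0 < Real.sqrt p₁ := Real.sqrt_pos.mpr hp₁
  have hsp₂ : 0 < Real.sqrt p₂ := Real.sqrt_pos.mpr hp₂
  have hππ : Real.sqrt π * Real.sqrt π = π := Real.mul_self_sqrt Real.pi_nonneg
  have hπ0 : (0:ℝ) < π := Real.pi_pos
  have hsπ0 : (0:ℝ) < Real.sqrt π := Real.sqrt_pos.mpr hπ0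
  -- the c functions
  set c₁ : ℝ → ℝ → ℝ := fun x₁ u => 2*u^2*Real.exp (-(u^2/(4*x₁))) * f u with hc₁
  set c₂ : ℝ → ℝ := fun u => Real.sqrt π/(2*π) * (u * (Real.exp (-u * Real.sqrt p₂) * f u))
    with hc₂
  have hc₁meas : ∀ x₁ : ℝ, Measurable (c₁ x₁) := by
    intro x₁; rw [hc₁]
    exact ((measurable_const.mul (measurable_id.pow_const 2)).mul
      (((measurable_id.pow_const 2).div_const (4*x₁)).neg.exp)).mul hf_meas
  have hc₂meas : Measurable c₂ := by
    rw [hc₂]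
    exact measurable_const.mul (measurable_id.mul
      (((measurable_id.neg.mul_const (Real.sqrt p₂)).exp).mul hf_meas))
  have hbound₁ : ∀ x₁ : ℝ, 0 < x₁ →
      IntegrableOn (fun u => |c₁ x₁ u| / u * Real.exp (-u * Real.sqrt p₂)) (Ioi 0) := by
    intro x₁ hx₁
    apply ((hf_int (Real.sqrt p₂) hsp₂).const_mul (2*Real.sqrt (4*x₁))).mono'
    · exact (((hc₁meas x₁).abs.div measurable_id).mul
        ((measurable_id.neg.mul_const _).exp)).aestronglyMeasurable
    · filter_upwards [ae_restrict_mem measurableSet_Ioi] with u hu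
      have hu' : (0:ℝ) < u := mem_Ioi.mp hu
      have hnn : (0:ℝ) ≤ |c₁ x₁ u| / u * Real.exp (-u * Real.sqrt p₂) :=
        mul_nonneg (div_nonneg (abs_nonneg _) hu'.le) (Real.exp_pos _).le
      rw [Real.norm_eq_abs, abs_of_nonneg hnn]
      have habs : |c₁ x₁ u| = 2*u^2*Real.exp (-(u^2/(4*x₁))) * |f u| := by
        rw [hc₁]
        rw [abs_mul, abs_mul, abs_of_nonneg (by positivity : (0:ℝ) ≤ 2*u^2),
          abs_of_pos (Real.exp_pos _)]
      rw [habs]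
      calc 2*u^2*Real.exp (-(u^2/(4*x₁))) * |f u| / u * Real.exp (-u * Real.sqrt p₂)
          = (u * Real.exp (-(u^2/(4*x₁)))) *
              (2 * (Real.exp (-Real.sqrt p₂ * u) * |f u|)) := by
            rw [show -u * Real.sqrt p₂ = -Real.sqrt p₂ * u by ring]
            field_simp
        _ ≤ Real.sqrt (4*x₁) * (2 * (Real.exp (-Real.sqrt p₂ * u) * |f u|)) := by
            apply mul_le_mul_of_nonneg_right (mul_exp_sq_le (by positivity) hu'.le)
            positivity
        _ = 2*Real.sqrt (4*x₁) * (Real.exp (-Real.sqrt p₂ * u) * |f u|) := by ring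
  have hbound₂ :
      IntegrableOn (fun u => |c₂ u| / u * Real.exp (-u * Real.sqrt p₁)) (Ioi 0) := by
    apply ((hf_int (Real.sqrt p₁ + Real.sqrt p₂) (by positivity)).const_mul
      (Real.sqrt π/(2*π))).mono'
    · exact ((hc₂meas.abs.div measurable_id).mul
        ((measurable_id.neg.mul_const _).exp)).aestronglyMeasurable
    · filter_upwards [ae_restrict_mem measurableSet_Ioi] with u hu
      have hu' : (0:ℝ) < u := mem_Ioi.mp hu
      have hnn : (0:ℝ) ≤ |c₂ u| / u * Real.exp (-u * Real.sqrt p₁) :=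
        mul_nonneg (div_nonneg (abs_nonneg _) hu'.le) (Real.exp_pos _).le
      rw [Real.norm_eq_abs, abs_of_nonneg hnn]
      have habs : |c₂ u| = Real.sqrt π/(2*π) * (u * (Real.exp (-u * Real.sqrt p₂) * |f u|)) := by
        rw [hc₂]
        rw [abs_mul, abs_mul, abs_mul, abs_of_nonneg (by positivity : (0:ℝ) ≤ Real.sqrt π/(2*π)),
          abs_of_pos hu', abs_of_pos (Real.exp_pos _)]
      rw [habs]
      apply le_of_eq
      rw [show -(Real.sqrt p₁ + Real.sqrt p₂) * u = -u * Real.sqrt p₂ + -u * Real.sqrt p₁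
        by ring, Real.exp_add]
      field_simp
  symm
  calc ∫ x₁ in Ioi (0:ℝ), ∫ x₂ in Ioi (0:ℝ),
        Real.exp (-p₁ * x₁ - p₂ * x₂) *
          (1 / (8 * π) * (x₁ * x₂) ^ (-(3:ℝ)/2) *
            ((fun s => ∫ t in Ioi (0:ℝ), Real.exp (-s * t) * Real.sqrt t * f (Real.sqrt t))
              (1 / (4 * x₁) + 1 / (4 * x₂))))
      = ∫ x₁ in Ioi (0:ℝ), (1/(8*π) * (Real.exp (-p₁*x₁) * x₁ ^ (-(3:ℝ)/2))) *
          ∫ x₂ in Ioi (0:ℝ), ∫ u in Ioi (0:ℝ),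
            (Real.exp (-p₂*x₂) * (x₂ ^ (-(3:ℝ)/2) * Real.exp (-(u^2/(4*x₂))))) * c₁ x₁ u := by
        apply setIntegral_congr_fun measurableSet_Ioi
        intro x₁ hx₁
        have hx₁' : (0:ℝ) < x₁ := mem_Ioi.mp hx₁
        beta_reduce
        rw [← integral_const_mul]
        apply setIntegral_congr_fun measurableSet_Ioi
        intro x₂ hx₂
        have hx₂' : (0:ℝ) < x₂ := mem_Ioi.mp hx₂
        simp only
        rw [G_formula f (1 / (4 * x₁) + 1 / (4 * x₂))]
        calc Real.exp (-p₁ * x₁ - p₂ * x₂) *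
              (1 / (8 * π) * (x₁ * x₂) ^ (-(3:ℝ)/2) *
                ∫ u in Ioi (0:ℝ), 2*u^2*Real.exp (-(1/(4*x₁)+1/(4*x₂)) * u^2) * f u)
            = ∫ u in Ioi (0:ℝ),
                (Real.exp (-p₁ * x₁ - p₂ * x₂) * (1 / (8 * π) * (x₁ * x₂) ^ (-(3:ℝ)/2))) *
                  (2*u^2*Real.exp (-(1/(4*x₁)+1/(4*x₂)) * u^2) * f u) := by
              rw [integral_const_mul]; ring
          _ = ∫ u in Ioi (0:ℝ),
                (1/(8*π) * (Real.exp (-p₁*x₁) * x₁ ^ (-(3:ℝ)/2))) *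
                  ((Real.exp (-p₂*x₂) * (x₂ ^ (-(3:ℝ)/2) * Real.exp (-(u^2/(4*x₂))))) *
                    c₁ x₁ u) := by
              apply setIntegral_congr_fun measurableSet_Ioi
              intro u hu
              rw [hc₁]
              simp only
              rw [Real.mul_rpow hx₁'.le hx₂'.le,
                show -p₁ * x₁ - p₂ * x₂ = -p₁*x₁ + -p₂*x₂ by ring, Real.exp_add,
                show -(1/(4*x₁)+1/(4*x₂)) * u^2 = -(u^2/(4*x₂)) + -(u^2/(4*x₁)) by
                  field_simp; ring, Real.exp_add]
              ring
          _ = (1/(8*π) * (Real.exp (-p₁*x₁) * x₁ ^ (-(3:ℝ)/2))) *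
              ∫ u in Ioi (0:ℝ),
                (Real.exp (-p₂*x₂) * (x₂ ^ (-(3:ℝ)/2) * Real.exp (-(u^2/(4*x₂))))) *
                  c₁ x₁ u := integral_const_mul _ _
    _ = ∫ x₁ in Ioi (0:ℝ), (1/(8*π) * (Real.exp (-p₁*x₁) * x₁ ^ (-(3:ℝ)/2))) *
          ∫ u in Ioi (0:ℝ),
            (2 * Real.sqrt π / u * Real.exp (-u * Real.sqrt p₂)) * c₁ x₁ u := by
        apply setIntegral_congr_fun measurableSet_Ioi
        intro x₁ hx₁
        have hx₁' : (0:ℝ) < x₁ := mem_Ioi.mp hx₁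
        beta_reduce
        rw [kernel_swap p₂ hp₂ (c₁ x₁) (hc₁meas x₁) (hbound₁ x₁ hx₁')]
    _ = ∫ x₁ in Ioi (0:ℝ), ∫ u in Ioi (0:ℝ),
          (Real.exp (-p₁*x₁) * (x₁ ^ (-(3:ℝ)/2) * Real.exp (-(u^2/(4*x₁))))) * c₂ u := by
        apply setIntegral_congr_fun measurableSet_Ioi
        intro x₁ hx₁
        have hx₁' : (0:ℝ) < x₁ := mem_Ioi.mp hx₁
        beta_reduce
        rw [← integral_const_mul]
        apply setIntegral_congr_fun measurableSet_Ioi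
        intro u hu
        have hu' : (0:ℝ) < u := mem_Ioi.mp hu
        rw [hc₁, hc₂]
        simp only
        field_simp
        ring
    _ = ∫ u in Ioi (0:ℝ), (2 * Real.sqrt π / u * Real.exp (-u * Real.sqrt p₁)) * c₂ u :=
        kernel_swap p₁ hp₁ c₂ hc₂meas hbound₂
    _ = ∫ s in Ioi (0:ℝ), Real.exp (-s * (Real.sqrt p₁ + Real.sqrt p₂)) * f s := by
        apply setIntegral_congr_fun measurableSet_Ioi
        intro u hu
        have hu' : (0:ℝ) < u := mem_Ioi.mp hu
        rw [hc₂]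
        simp only
        rw [show -u * (Real.sqrt p₁ + Real.sqrt p₂) = -u*Real.sqrt p₁ + -u*Real.sqrt p₂
          by ring, Real.exp_add]
        field_simp
        linear_combination (f u) * hππ
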